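/- Let m, k be positive integers with gcd(2^k − 1, 2^m + 1) = 1, and let U be the subgroup of order 2^m + 1 of F_{2^{2m}}^×. Then for every x ∈ U the denominator x^{2^k+1} + x + 1 is nonzero, and the map x ↦ (x^{2^k+1} + x^{2^k} + 1)/(x^{2^k+1} + x + 1) is a bijection of U onto itself. -/

import Mathlib

-- number theory lemma
theorem aux_odd' (m k : ℕ) (hk : 0 < k)
    (hgcd : Nat.gcd (2 ^ k - 1) (2 ^ m + 1) = 1) : Odd (k / Nat.gcd k m) := by
  set g := Nat.gcd k m with hg
  have hg0 : 0 < g := Nat.gcd_pos_of_pos_left m hk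
  rcases Nat.even_or_odd (k / g) with he | ho
  · exfalso
    -- m/g is odd
    have hco : Nat.Coprime (k / g) (m / g) := Nat.coprime_div_gcd_div_gcd hg0
    have hmo : Odd (m / g) := by
      rcases Nat.even_or_odd (m / g) with he2 | ho2
      · exfalso
        obtain ⟨a, ha⟩ := he
        obtain ⟨b, hb⟩ := he2
        have : 2 ∣ Nat.gcd (k/g) (m/g) := Nat.dvd_gcd ⟨a, by omega⟩ ⟨b, by omega⟩
        rw [hco] at this; omega
      · exact ho2
    -- 2^g+1 divides 2^k-1 : since 2g ∣ k
    have hk2g : 2 * g ∣ k := by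
      obtain ⟨a, ha⟩ := he
      have hdm := Nat.div_mul_cancel (Nat.gcd_dvd_left k m)
      refine ⟨a, ?_⟩
      have : k = (a + a) * g := by rw [← ha, hdm]
      rw [this]; ring
    have d1 : ((2:ℤ)^g + 1) ∣ ((2:ℤ)^k - 1) := by
      obtain ⟨c, hc⟩ := hk2g
      have h1 : ((2:ℤ)^(2*g) - 1) ∣ ((2:ℤ)^k - 1) := by
        have := sub_dvd_pow_sub_pow ((2:ℤ)^(2*g)) 1 c
        simpa [← pow_mul, ← hc] using this
      refine dvd_trans ?_ h1
      have : (2:ℤ)^(2*g) - 1 = ((2:ℤ)^g + 1) * ((2:ℤ)^g - 1) := by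
        rw [two_mul, pow_add]; ring
      rw [this]; exact Dvd.intro _ rfl
    have d2 : ((2:ℤ)^g + 1) ∣ ((2:ℤ)^m + 1) := by
      have := Odd.add_dvd_pow_add_pow ((2:ℤ)^g) 1 hmo
      have hmg : g * (m / g) = m := Nat.mul_div_cancel' (Nat.gcd_dvd_right k m)
      simpa [← pow_mul, hmg] using this
    -- transfer to ℕ and contradict
    have h1 : (1:ℕ) ≤ 2^k := Nat.one_le_two_pow
    have dn1 : (2^g + 1) ∣ (2^k - 1) := by
      have := Int.natCast_dvd_natCast.mpr (dvd_refl (2^g+1))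
      rw [← Int.natCast_dvd_natCast]
      push_cast [Nat.cast_sub h1]
      exact_mod_cast d1
    have dn2 : (2^g + 1) ∣ (2^m + 1) := by
      rw [← Int.natCast_dvd_natCast]
      push_cast
      exact_mod_cast d2
    have hd := Nat.dvd_gcd dn1 dn2
    rw [hgcd] at hd
    have := Nat.le_of_dvd one_pos hd
    have : (1:ℕ) ≤ 2^g := Nat.one_le_two_pow
    omega
  · exact ho


theorem aux_field' (F : Type*) [Field F] [CharP F 2] (m k : ℕ) (hm : 0 < m) (hk : 0 < k)
    (hodd : Odd (k / Nat.gcd k m)) (z : F)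
    (hzk : z ^ (2^k) = z) (hzm : z ^ (2^m) = z + 1) : False := by
  haveI : Fact (Nat.Prime 2) := ⟨Nat.prime_two⟩
  set g := Nat.gcd k m with hgdef
  have hg0 : 0 < g := Nat.gcd_pos_of_pos_left m hk
  have h2 : (2 : F) = 0 := CharTwo.two_eq_zero
  -- powpow
  have powpow : ∀ (c : F) (i j : ℕ), c ^ (2^(i+j)) = (c ^ (2^i)) ^ (2^j) := by
    intro c i j; rw [pow_add, pow_mul]
  -- casts are 0 or 1 and fixed by frobenius powers
  have cast01 : ∀ b : ℕ, ((b : F) = 0 ∨ (b : F) = 1) := by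
    intro b
    rcases Nat.even_or_odd b with ⟨c, hc⟩ | ⟨c, hc⟩
    · left; subst hc; push_cast; linear_combination (c : F) * h2
    · right; subst hc; push_cast; linear_combination (c : F) * h2
  have frobfix : ∀ (c : F), (c = 0 ∨ c = 1) → ∀ j : ℕ, c ^ (2^j) = c := by
    rintro c (rfl | rfl) j
    · exact zero_pow (by positivity)
    · exact one_pow _
  have castfix : ∀ (b : ℕ) (j : ℕ), ((b:F)) ^ (2^j) = (b:F) := fun b j => frobfix _ (cast01 b) j
  -- iterates
  have hak_iter : ∀ a : ℕ, z ^ (2^(a*k)) = z := by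
    intro a; induction a with
    | zero => simp
    | succ n ih => rw [Nat.succ_mul, powpow, ih, hzk]
  have hbm_iter : ∀ b : ℕ, z ^ (2^(b*m)) = z + (b : F) := by
    intro b; induction b with
    | zero => simp
    | succ n ih =>
        rw [Nat.succ_mul, powpow, ih, add_pow_char_pow _ _ 2 m, hzm, castfix]
        push_cast; ring
  -- Bezout: ∃ a b, a*k = g + b*m
  obtain ⟨a, b, hab⟩ : ∃ a b : ℕ, a * k = g + b * m := by
    have hB := Nat.gcd_eq_gcd_ab k m
    set A := Nat.gcdA k m
    set B := Nat.gcdB k m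
    set n : ℕ := (A.natAbs + B.natAbs + 1)
    have hA' : (0:ℤ) ≤ A + n * m := by
      have h1 : -A ≤ |A| := neg_le_abs A
      have hn : (n:ℤ) ≥ |A| + 1 := by
        have : (n:ℤ) = |A| + |B| + 1 := by simp [n]
        have := abs_nonneg B
        omega
      have h3 : (n:ℤ) * m ≥ (n:ℤ) * 1 := by
        have : (1:ℤ) ≤ m := by exact_mod_cast hm
        exact mul_le_mul_of_nonneg_left this (by positivity)
      linarith
    have hB' : (0:ℤ) ≤ -B + n * k := by
      have h1 : B ≤ |B| := le_abs_self B
      have hn : (n:ℤ) ≥ |B| + 1 := by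
        have : (n:ℤ) = |A| + |B| + 1 := by simp [n]
        have := abs_nonneg A
        omega
      have h3 : (n:ℤ) * k ≥ (n:ℤ) * 1 := by
        have : (1:ℤ) ≤ k := by exact_mod_cast hk
        exact mul_le_mul_of_nonneg_left this (by positivity)
      linarith
    refine ⟨(A + n * m).toNat, (-B + n * k).toNat, ?_⟩
    have e1 : ((A + n*m).toNat : ℤ) = A + n*m := Int.toNat_of_nonneg hA'
    have e2 : (((-B + n*k)).toNat : ℤ) = -B + n*k := Int.toNat_of_nonneg hB'
    have : ((A + n*m).toNat : ℤ) * k = g + ((-B + n*k).toNat : ℤ) * m := by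
      rw [e1, e2]
      have : (g : ℤ) = k * A + m * B := by exact_mod_cast hB
      rw [this]; ring
    exact_mod_cast this
  -- z^(2^g) = z + ε with ε = (b:F)
  have hstep : z ^ (2^g) = z + (b : F) := by
    have h1 : z ^ (2^(a*k)) = z := hak_iter a
    rw [hab, add_comm, powpow, hbm_iter b, add_pow_char_pow _ _ 2 g, castfix] at h1
    -- h1 : z^(2^g) + b = z
    linear_combination h1 - (b:F) * h2
  -- general iterate of g-step
  have hgj : ∀ j : ℕ, z ^ (2^(g*j)) = z + (j : F) * (b : F) := by
    intro j; induction j with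
    | zero => simp
    | succ n ih =>
        rw [Nat.mul_succ, powpow, ih, add_pow_char_pow _ _ 2 g, hstep,
            mul_pow, castfix, castfix]
        push_cast; ring
  -- j = k/g : ε = 0
  have hkg : g * (k / g) = k := Nat.mul_div_cancel' (Nat.gcd_dvd_left k m)
  have hodd1 : ((k / g : ℕ) : F) = 1 := by
    obtain ⟨c, hc⟩ := hodd
    rw [hc]; push_cast; linear_combination (c:F) * h2
  have heps : (b : F) = 0 := by
    have := hgj (k / g)
    rw [hkg, hzk, hodd1, one_mul] at this
    linear_combination -this
  -- j = m/g : contradiction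
  have hmg : g * (m / g) = m := Nat.mul_div_cancel' (Nat.gcd_dvd_right k m)
  have := hgj (m / g)
  rw [hmg, hzm, heps, mul_zero] at this
  simpa using this


theorem stmt_5 (m k : ℕ) (hm : 0 < m) (hk : 0 < k)
    (hgcd : Nat.gcd (2 ^ k - 1) (2 ^ m + 1) = 1)
    (F : Type*) [Field F] [Fintype F] (hF : Fintype.card F = 2 ^ (2 * m)) :
    (∀ x : F, x ^ (2 ^ m + 1) = 1 → x ^ (2 ^ k + 1) + x + 1 ≠ 0) ∧
      Set.BijOn (fun x : F => (x ^ (2 ^ k + 1) + x ^ 2 ^ k + 1) / (x ^ (2 ^ k + 1) + x + 1))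
        {x : F | x ^ (2 ^ m + 1) = 1} {x : F | x ^ (2 ^ m + 1) = 1} := by
  -- characteristic 2
  haveI hchar : CharP F 2 := by
    obtain ⟨p, hp⟩ := CharP.exists F
    haveI := hp
    haveI : Fact (Nat.Prime p) := ⟨CharP.char_is_prime F p⟩
    obtain ⟨n, hn⟩ := FiniteField.card F p
    have hpd : p ∣ 2 ^ (2*m) := by
      rw [← hF, hn.2]; exact dvd_pow_self p n.2.ne'
    have : p = 2 := (Nat.prime_dvd_prime_iff_eq (Fact.out) Nat.prime_two).mp
      (Nat.Prime.dvd_of_dvd_pow (Fact.out) hpd)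
    rwa [this] at hp
  haveI : Fact (Nat.Prime 2) := ⟨Nat.prime_two⟩
  have h2 : (2 : F) = 0 := CharTwo.two_eq_zero
  have hfq : ∀ a b : F, (a + b) ^ (2^k) = a ^ (2^k) + b ^ (2^k) := fun a b =>
    add_pow_char_pow a b 2 k
  have hfm : ∀ a b : F, (a + b) ^ (2^m) = a ^ (2^m) + b ^ (2^m) := fun a b =>
    add_pow_char_pow a b 2 m
  -- Lemma 1 : on U, x^(2^k) = x implies x = 1
  have one_on_U : ∀ x : F, x ^ (2^m+1) = 1 → x ^ (2^k) = x → x = 1 := by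
    intro x hU hxq
    have hx0 : x ≠ 0 := by
      intro h; rw [h, zero_pow (by positivity)] at hU; exact zero_ne_one hU
    have hord1 : x ^ (2^k - 1) = 1 := by
      have h1 : x ^ (2^k - 1) * x = 1 * x := by
        rw [← pow_succ, one_mul]
        have : 2^k - 1 + 1 = 2^k := Nat.succ_pred_eq_of_pos (Nat.two_pow_pos k)
        rw [this, hxq]
      exact mul_right_cancel₀ hx0 h1
    have d1 : orderOf x ∣ 2^k - 1 := orderOf_dvd_of_pow_eq_one hord1
    have d2 : orderOf x ∣ 2^m + 1 := orderOf_dvd_of_pow_eq_one hU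
    have hd := Nat.dvd_gcd d1 d2
    rw [hgcd, Nat.dvd_one] at hd
    exact orderOf_eq_one_iff.mp hd
  -- Part 1: denominator nonzero on U
  have part1 : ∀ x : F, x ^ (2 ^ m + 1) = 1 → x ^ (2 ^ k + 1) + x + 1 ≠ 0 := by
    intro x hU hD
    have hx0 : x ≠ 0 := by
      intro h; rw [h, zero_pow (by positivity)] at hU; exact zero_ne_one hU
    -- conjugate of D is 0, multiply by x^(2^k+1) to get N = 0
    have hconj : (x ^ (2^k+1)) ^ (2^m) + x ^ (2^m) + 1 = 0 := by
      have := congrArg (fun a : F => a ^ (2^m)) hD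
      rw [hfm, hfm, one_pow, zero_pow (by positivity : 2^m ≠ 0)] at this
      exact this
    have e1 : x ^ (2^k+1) * (x ^ (2^k+1)) ^ (2^m) = 1 := by
      rw [← pow_succ' , pow_right_comm, hU, one_pow]
    have e2 : x ^ (2^k+1) * x ^ (2^m) = x ^ (2^k) := by
      have : x ^ (2^k+1) * x ^ (2^m) = x ^ (2^m+1) * x ^ (2^k) := by ring
      rw [this, hU, one_mul]
    have hN : x ^ (2^k+1) + x ^ (2^k) + 1 = 0 := by
      have := congrArg (fun a : F => x ^ (2^k+1) * a) hconj
      simp only [mul_zero, mul_add, mul_one] at this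
      rw [e1, e2] at this
      linear_combination this
    have hxq : x ^ (2^k) = x := by
      linear_combination hN + hD - (x + 1 + x^(2^k+1)) * h2
    have hx1 : x = 1 := one_on_U x hU hxq
    rw [hx1] at hD
    simp only [one_pow] at hD
    have : (1 : F) = 0 := by linear_combination hD - h2
    exact one_ne_zero this
  refine ⟨part1, ?_⟩
  set gfun : F → F := fun x : F =>
    (x ^ (2 ^ k + 1) + x ^ 2 ^ k + 1) / (x ^ (2 ^ k + 1) + x + 1) with hgfun
  set U : Set F := {x : F | x ^ (2 ^ m + 1) = 1} with hUdef
  -- maps to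
  have hmaps : Set.MapsTo gfun U U := by
    intro x hx
    have hU : x ^ (2^m+1) = 1 := hx
    have hD : x ^ (2^k+1) + x + 1 ≠ 0 := part1 x hU
    have e1 : x ^ (2^k+1) * (x ^ (2^k+1)) ^ (2^m) = 1 := by
      rw [← pow_succ', pow_right_comm, hU, one_pow]
    have e2 : x ^ (2^k+1) * x ^ (2^m) = x ^ (2^k) := by
      have : x ^ (2^k+1) * x ^ (2^m) = x ^ (2^m+1) * x ^ (2^k) := by ring
      rw [this, hU, one_mul]
    have e3 : x ^ (2^k+1) * (x ^ (2^k)) ^ (2^m) = x := by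
      have h4 : x ^ (2^k+1) * (x ^ (2^k)) ^ (2^m) = (x ^ (2^m+1)) ^ (2^k) * x := by
        rw [← pow_mul, ← pow_mul]; ring
      rw [h4, hU, one_pow, one_mul]
    have hA : x ^ (2^k+1) * (x ^ (2^k+1) + x + 1) ^ (2^m) = x ^ (2^k+1) + x ^ (2^k) + 1 := by
      rw [hfm, hfm, one_pow, mul_add, mul_add, e1, e2, mul_one]; ring
    have hB : x ^ (2^k+1) * (x ^ (2^k+1) + x ^ (2^k) + 1) ^ (2^m)
        = x ^ (2^k+1) + x + 1 := by
      rw [hfm, hfm, one_pow, mul_add, mul_add, e1, e3, mul_one]; ring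
    have hND : (x ^ (2^k+1) + x ^ (2^k) + 1) ^ (2^m+1) = (x ^ (2^k+1) + x + 1) ^ (2^m+1) := by
      rw [pow_succ (x ^ (2^k+1) + x ^ (2^k) + 1) (2^m), pow_succ (x ^ (2^k+1) + x + 1) (2^m)]
      calc (x ^ (2^k+1) + x ^ (2^k) + 1) ^ (2^m) * (x ^ (2^k+1) + x ^ (2^k) + 1)
          = (x ^ (2^k+1) + x ^ (2^k) + 1) ^ (2^m) * (x ^ (2^k+1) * (x ^ (2^k+1) + x + 1) ^ (2^m)) := by rw [hA]
        _ = (x ^ (2^k+1) + x + 1) ^ (2^m) * (x ^ (2^k+1) * (x ^ (2^k+1) + x ^ (2^k) + 1) ^ (2^m)) := by ring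
        _ = (x ^ (2^k+1) + x + 1) ^ (2^m) * (x ^ (2^k+1) + x + 1) := by rw [hB]
    show gfun x ∈ U
    have : gfun x ^ (2^m+1) = 1 := by
      rw [hgfun]
      simp only
      rw [div_pow, hND, div_self (pow_ne_zero _ hD)]
    exact this
  -- injectivity
  have hinj : Set.InjOn gfun U := by
    intro x hx y hy hxy
    have hUx : x ^ (2^m+1) = 1 := hx
    have hUy : y ^ (2^m+1) = 1 := hy
    have hDx : x ^ (2^k+1) + x + 1 ≠ 0 := part1 x hUx
    have hDy : y ^ (2^k+1) + y + 1 ≠ 0 := part1 y hUy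
    have hxy' : (x ^ (2^k+1) + x ^ (2^k) + 1) / (x ^ (2^k+1) + x + 1)
        = (y ^ (2^k+1) + y ^ (2^k) + 1) / (y ^ (2^k+1) + y + 1) := hxy
    -- x = 1 iff gfun x = 1
    have hg1 : ∀ z : F, z ^ (2^m+1) = 1 → (z ^ (2^k+1) + z ^ (2^k) + 1) / (z ^ (2^k+1) + z + 1) = 1 → z = 1 := by
      intro z hUz hgz
      have hDz : z ^ (2^k+1) + z + 1 ≠ 0 := part1 z hUz
      have := (div_eq_one_iff_eq hDz).mp hgz
      have hzq : z ^ (2^k) = z := by linear_combination this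
      exact one_on_U z hUz hzq
    by_cases hx1 : x = 1
    · -- gfun x = 1, so y = 1
      subst hx1
      have hgx : (1 ^ (2^k+1) + 1 ^ (2^k) + (1:F)) / (1 ^ (2^k+1) + 1 + 1) = 1 := by
        simp only [one_pow]
        rw [div_eq_one_iff_eq (by simpa using hDx)]
      rw [hgx] at hxy'
      exact (hg1 y hUy hxy'.symm).symm
    by_cases hy1 : y = 1
    · subst hy1
      have hgy : (1 ^ (2^k+1) + 1 ^ (2^k) + (1:F)) / (1 ^ (2^k+1) + 1 + 1) = 1 := by
        simp only [one_pow]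
        rw [div_eq_one_iff_eq (by simpa using hDy)]
      rw [hgy] at hxy'
      exact hg1 x hUx hxy'
    -- main case
    have hND : (x ^ (2^k+1) + x ^ (2^k) + 1) * (y ^ (2^k+1) + y + 1)
        = (y ^ (2^k+1) + y ^ (2^k) + 1) * (x ^ (2^k+1) + x + 1) :=
      (div_eq_div_iff hDx hDy).mp hxy'
    have hx0 : x ≠ 0 := by
      intro h; rw [h, zero_pow (by positivity)] at hUx; exact zero_ne_one hUx
    have hy0 : y ≠ 0 := by
      intro h; rw [h, zero_pow (by positivity)] at hUy; exact zero_ne_one hUy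
    have hxp1 : x + 1 ≠ 0 := by
      intro h; exact hx1 ((by rwa [CharTwo.add_eq_iff_eq_add, zero_add] at h))
    have hyp1 : y + 1 ≠ 0 := by
      intro h; exact hy1 ((by rwa [CharTwo.add_eq_iff_eq_add, zero_add] at h))
    set t : F := (x+1)⁻¹ with htdef
    set u : F := (y+1)⁻¹ with hudef
    have ht0 : t ≠ 0 := inv_ne_zero hxp1
    have hu0 : u ≠ 0 := inv_ne_zero hyp1
    have hxt : x * t = t + 1 := by
      have h := mul_inv_cancel₀ hxp1
      rw [← htdef] at h
      linear_combination h - t * h2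
    have hyu : y * u = u + 1 := by
      have h := mul_inv_cancel₀ hyp1
      rw [← hudef] at h
      linear_combination h - u * h2
    -- conjugation facts
    have htM : t ^ (2^m) = t + 1 := by
      have e1 : x ^ (2^m) * x = 1 := by rw [← pow_succ]; exact hUx
      have e2 : (x ^ (2^m) + 1) * (x * t) = 1 := by
        linear_combination t * e1 + hxt + t * h2
      have e3 : (x+1) ^ (2^m) = x ^ (2^m) + 1 := by rw [hfm, one_pow]
      calc t ^ (2^m) = ((x+1) ^ (2^m))⁻¹ := by rw [htdef, inv_pow]
        _ = (x ^ (2^m) + 1)⁻¹ := by rw [e3]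
        _ = x * t := inv_eq_of_mul_eq_one_right e2
        _ = t + 1 := hxt
    have huM : u ^ (2^m) = u + 1 := by
      have e1 : y ^ (2^m) * y = 1 := by rw [← pow_succ]; exact hUy
      have e2 : (y ^ (2^m) + 1) * (y * u) = 1 := by
        linear_combination u * e1 + hyu + u * h2
      have e3 : (y+1) ^ (2^m) = y ^ (2^m) + 1 := by rw [hfm, one_pow]
      calc u ^ (2^m) = ((y+1) ^ (2^m))⁻¹ := by rw [hudef, inv_pow]
        _ = (y ^ (2^m) + 1)⁻¹ := by rw [e3]
        _ = y * u := inv_eq_of_mul_eq_one_right e2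
        _ = u + 1 := hyu
    -- q-power versions
    have hxtq : x ^ (2^k) * t ^ (2^k) = t ^ (2^k) + 1 := by
      rw [← mul_pow, hxt, hfq, one_pow]
    have hyuq : y ^ (2^k) * u ^ (2^k) = u ^ (2^k) + 1 := by
      rw [← mul_pow, hyu, hfq, one_pow]
    -- transfer N, D to t-world
    have hNx : t ^ (2^k+1) * (x ^ (2^k+1) + x ^ (2^k) + 1)
        = t ^ (2^k) * t + t ^ (2^k) + 1 := by
      linear_combination (x*t + t) * hxtq + (t^(2^k)+1) * hxt + (t*(t^(2^k)+1)) * h2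
    have hDxt : t ^ (2^k+1) * (x ^ (2^k+1) + x + 1)
        = t ^ (2^k) * t + t + 1 := by
      linear_combination (x*t) * hxtq + (2*t^(2^k)+1) * hxt + (t^(2^k)*t + t^(2^k)) * h2
    have hNy : u ^ (2^k+1) * (y ^ (2^k+1) + y ^ (2^k) + 1)
        = u ^ (2^k) * u + u ^ (2^k) + 1 := by
      linear_combination (y*u + u) * hyuq + (u^(2^k)+1) * hyu + (u*(u^(2^k)+1)) * h2
    have hDyu : u ^ (2^k+1) * (y ^ (2^k+1) + y + 1)
        = u ^ (2^k) * u + u + 1 := by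
      linear_combination (y*u) * hyuq + (2*u^(2^k)+1) * hyu + (u^(2^k)*u + u^(2^k)) * h2
    have hNDt : (t^(2^k)*t + t^(2^k) + 1) * (u^(2^k)*u + u + 1)
        = (u^(2^k)*u + u^(2^k) + 1) * (t^(2^k)*t + t + 1) := by
      rw [← hNx, ← hDyu, ← hNy, ← hDxt]
      linear_combination t^(2^k+1)*u^(2^k+1)*hND
    have hR0 : (t^(2^k)+t)*(u^(2^k)*u+u+1) + (u^(2^k)+u)*(t^(2^k)*t+t+1) = 0 := by
      linear_combination hNDt +
        (t*u*u^(2^k) + t*u + t + t*t^(2^k)*u^(2^k) + t*u^(2^k) + u^(2^k)) * h2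
    -- now show t = u
    by_cases hd : t + u = 0
    · have htu : t = u := by rwa [CharTwo.add_eq_iff_eq_add, zero_add] at hd
      rw [htdef, hudef] at htu
      have := inv_injective htu
      exact add_right_cancel this
    · exfalso
      have hspade : (t+u)*((t^(2^k))^2 + t^(2^k) + 1) + (t^(2^k)+u^(2^k))*(t^2+t+1)
          + (t+u)*(t^(2^k)+u^(2^k))*(t^(2^k)+t) = 0 := by
        linear_combination hR0 +
          (t*(t^(2^k))^2 + t*t^(2^k) + u*(t^(2^k))^2 + t^2*t^(2^k) + t^2*u^(2^k) - t*u) * h2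
      set e : F := (t^2+t+1)/(t+u) with hedef
      have hdQ : (t+u)^(2^k) = t^(2^k) + u^(2^k) := hfq t u
      have hdQ0 : t^(2^k) + u^(2^k) ≠ 0 := by
        rw [← hdQ]; exact pow_ne_zero _ hd
      have he1 : (t+u) * e = t^2+t+1 := by
        rw [hedef]; field_simp
      have he2 : (t^(2^k) + u^(2^k)) * e^(2^k) = (t^(2^k))^2 + t^(2^k) + 1 := by
        have hcc : (t^2+t+1)^(2^k) = (t^(2^k))^2 + t^(2^k) + 1 := by
          rw [hfq, hfq, one_pow, pow_right_comm]
        rw [← hdQ, ← mul_pow, he1, hcc]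
      have he : e^(2^k) + e = t^(2^k) + t := by
        apply mul_left_cancel₀ (mul_ne_zero hd hdQ0)
        linear_combination (t^(2^k)+u^(2^k))*he1 + (t+u)*he2 + hspade
          - ((t+u)*(t^(2^k)+u^(2^k))*(t^(2^k)+t))*h2
      set z : F := e + t with hzdef
      have hzQ : z ^ (2^k) = z := by
        rw [hzdef, hfq]
        linear_combination he + (t^(2^k) - e) * h2
      have heM : e ^ (2^m) = e := by
        have hprep1 : (t^2+t+1)^(2^m) = t^2+t+1 := by
          rw [hfm, hfm, one_pow, pow_right_comm, htM]
          linear_combination (t+1)*h2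
        have hprep2 : (t+u)^(2^m) = t+u := by
          rw [hfm, htM, huM]
          linear_combination h2
        rw [hedef, div_pow, hprep1, hprep2]
      have hzM : z ^ (2^m) = z + 1 := by
        rw [hzdef, hfm, heM, htM]; ring
      exact aux_field' F m k hm hk (aux_odd' m k hk hgcd) z hzQ hzM
  exact ((Set.toFinite U).injOn_iff_bijOn_of_mapsTo hmaps).mp hinj
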